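/- Let w ≥ 4, assume a_{w-1} = 1, and let 0 ≤ s ≤ w. Then the (2w)×w matrix over F₂ obtained by stacking B^s on top of Q_s (the block matrix with row blocks B^s and Q_s) has rank exactly w. -/

import Mathlib

open Matrix

/-- The matrix `B` of MT-type recursions: first row zero, row `i` (0-indexed,
`1 ≤ i ≤ w-2`) is the standard basis row vector with a `1` in column `i+1`,
and the last row is `(a_{w-1}, …, a_0)` (stored as `a 0, …, a (w-1)`). -/
def mtB (w : ℕ) (a : Fin w → ZMod 2) : Matrix (Fin w) (Fin w) (ZMod 2) :=
  Matrix.of fun i j =>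
    if (i : ℕ) = w - 1 then a j
    else if 1 ≤ (i : ℕ) ∧ (j : ℕ) = (i : ℕ) + 1 then 1 else 0

/-- The matrix `C`: its only nonzero entry is a `1` in position `(1,2)` (1-indexed). -/
def mtC (w : ℕ) : Matrix (Fin w) (Fin w) (ZMod 2) :=
  Matrix.of fun i j => if (i : ℕ) = 0 ∧ (j : ℕ) = 1 then 1 else 0

/-- `Q_k = Σ_{i=0}^{k-1} B^i · C · B^{k-1-i}`. -/
def mtQ (w : ℕ) (a : Fin w → ZMod 2) (k : ℕ) : Matrix (Fin w) (Fin w) (ZMod 2) :=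
  ∑ i ∈ Finset.range k, (mtB w a) ^ i * mtC w * (mtB w a) ^ (k - 1 - i)

lemma mt_rowB (w : ℕ) (a : Fin w → ZMod 2) (hw : 4 ≤ w) :
    ∀ j, j ≤ w - 2 → ∀ c : Fin w,
      ((mtB w a) ^ j) ⟨1, by omega⟩ c = if (c : ℕ) = 1 + j then 1 else 0 := by
  intro j
  induction j with
  | zero =>
    intro _ c
    simp [Matrix.one_apply, Fin.ext_iff, eq_comm]
  | succ n ih =>
    intro hn c
    rw [pow_succ, Matrix.mul_apply]
    rw [Finset.sum_eq_single (⟨1 + n, by omega⟩ : Fin w)]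
    · rw [ih (by omega) _]
      rw [if_pos rfl, one_mul, mtB]
      simp only [Matrix.of_apply]
      rw [if_neg (by omega)]
      by_cases hc : (c : ℕ) = 1 + (n + 1)
      · rw [if_pos ⟨by omega, by omega⟩, if_pos hc]
      · rw [if_neg (by omega), if_neg hc]
    · intro b _ hb
      rw [ih (by omega) b, if_neg (by simpa [Fin.ext_iff] using hb), zero_mul]
    · intro h
      exact absurd (Finset.mem_univ _) h

lemma mt_CMC (w : ℕ) (a : Fin w → ZMod 2) (hw : 4 ≤ w) (j : ℕ) (hj : j ≤ w - 2) :
    mtC w * ((mtB w a) ^ j * mtC w) = 0 := by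
  ext i k
  simp only [Matrix.mul_apply, mtC, Matrix.of_apply, Matrix.zero_apply]
  rw [Finset.sum_eq_single (⟨1, by omega⟩ : Fin w)]
  · by_cases hi : (i : ℕ) = 0
    · rw [if_pos ⟨hi, rfl⟩, one_mul]
      rw [Finset.sum_eq_single (⟨0, by omega⟩ : Fin w)]
      · rw [mt_rowB w a hw j hj, if_neg (by simp; omega), zero_mul]
      · intro b _ hb
        rw [if_neg, mul_zero]
        simp [Fin.ext_iff] at hb ⊢
        omega
      · intro h; exact absurd (Finset.mem_univ _) h
    · rw [if_neg (by simp [hi]), zero_mul]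
  · intro b _ hb
    rw [if_neg, zero_mul]
    simp [Fin.ext_iff] at hb ⊢
    omega
  · intro h; exact absurd (Finset.mem_univ _) h

lemma mt_Dpow (w : ℕ) (a : Fin w → ZMod 2) (hw : 4 ≤ w) :
    ∀ s, s ≤ w → (mtB w a + mtC w) ^ s = (mtB w a) ^ s + mtQ w a s := by
  intro s
  induction s with
  | zero => simp [mtQ]
  | succ n ih =>
    intro hn
    have hQC : mtQ w a n * mtC w = 0 := by
      rw [mtQ, Finset.sum_mul]
      refine Finset.sum_eq_zero fun i hi => ?_
      have hi' : i < n := Finset.mem_range.mp hi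
      rw [mul_assoc, mul_assoc, mt_CMC w a hw (n - 1 - i) (by omega), mul_zero]
    have hQ : mtQ w a (n + 1) = mtQ w a n * mtB w a + (mtB w a) ^ n * mtC w := by
      rw [mtQ, Finset.sum_range_succ]
      congr 1
      · rw [mtQ, Finset.sum_mul]
        refine Finset.sum_congr rfl fun i hi => ?_
        have hi' : i < n := Finset.mem_range.mp hi
        rw [show n + 1 - 1 - i = (n - 1 - i) + 1 from by omega, pow_succ,
          ← mul_assoc]
      · simp
    rw [pow_succ, ih (by omega), add_mul, mul_add, mul_add, hQC, add_zero, ← pow_succ, hQ]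
    abel

lemma mt_D_inj (w : ℕ) (a : Fin w → ZMod 2) (hw : 4 ≤ w) (ha : a ⟨0, lt_of_lt_of_le (by norm_num) hw⟩ = 1)
    (x : Fin w → ZMod 2) (hx : (mtB w a + mtC w).mulVec x = 0) : x = 0 := by
  set D := mtB w a + mtC w with hD
  have hrow : ∀ i : Fin w, (i : ℕ) ≤ w - 2 → ∀ j : Fin w,
      D i j = if (j : ℕ) = (i : ℕ) + 1 then 1 else 0 := by
    intro i hi j
    simp only [hD, Matrix.add_apply, mtB, mtC, Matrix.of_apply]
    rw [if_neg (by omega)]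
    by_cases hi0 : (i : ℕ) = 0
    · rw [if_neg (by omega)]
      by_cases hj : (j : ℕ) = (i : ℕ) + 1
      · rw [if_pos ⟨hi0, by omega⟩, if_pos hj]; ring
      · rw [if_neg (by omega), if_neg hj]; ring
    · by_cases hj : (j : ℕ) = (i : ℕ) + 1
      · rw [if_pos ⟨by omega, hj⟩, if_pos hj, if_neg (by omega)]; ring
      · rw [if_neg (by omega), if_neg hj, if_neg (by omega)]; ring
  have hx1 : ∀ k : Fin w, 1 ≤ (k : ℕ) → x k = 0 := by
    intro k hk
    have h := congrFun hx ⟨(k : ℕ) - 1, by omega⟩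
    rw [Matrix.mulVec, dotProduct] at h
    rw [show (0 : Fin w → ZMod 2) ⟨(k:ℕ)-1, by omega⟩ = 0 from rfl] at h
    rw [Finset.sum_eq_single k] at h
    · rwa [hrow _ (by simp; omega) k, if_pos (by simp; omega), one_mul] at h
    · intro b _ hb
      rw [hrow _ (by simp; omega) b, if_neg, zero_mul]
      simp only [Fin.ext_iff] at hb ⊢
      omega
    · intro h'; exact absurd (Finset.mem_univ _) h'
  have hx0 : x ⟨0, by omega⟩ = 0 := by
    have h := congrFun hx ⟨w - 1, by omega⟩
    rw [Matrix.mulVec, dotProduct] at h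
    rw [show (0 : Fin w → ZMod 2) ⟨w-1, by omega⟩ = 0 from rfl] at h
    rw [Finset.sum_eq_single (⟨0, by omega⟩ : Fin w)] at h
    · rw [hD, Matrix.add_apply, mtB, mtC, Matrix.of_apply, Matrix.of_apply,
        if_pos (by simp), if_neg (by simp), add_zero, ha, one_mul] at h
      exact h
    · intro b _ hb
      rw [hx1 b (Nat.one_le_iff_ne_zero.mpr fun h0 => hb (Fin.ext h0)), mul_zero]
    · intro h'; exact absurd (Finset.mem_univ _) h'
  funext k
  by_cases hk : (k : ℕ) = 0
  · have : k = ⟨0, by omega⟩ := Fin.ext hk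
    rw [this]; exact hx0
  · exact hx1 k (by omega)

lemma mt_Ds_inj (w : ℕ) (a : Fin w → ZMod 2) (hw : 4 ≤ w) (ha : a ⟨0, lt_of_lt_of_le (by norm_num) hw⟩ = 1)
    (s : ℕ) : ∀ x : Fin w → ZMod 2, ((mtB w a + mtC w) ^ s).mulVec x = 0 → x = 0 := by
  induction s with
  | zero => intro x hx; simpa using hx
  | succ n ih =>
    intro x hx
    rw [pow_succ, ← Matrix.mulVec_mulVec] at hx
    exact mt_D_inj w a hw ha x (ih _ hx)

/-- the `2w × w` matrix obtained by stacking `B^s` on top of `Q_s`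
has rank exactly `w` (assuming `a_{w-1} = 1`). -/
theorem stmt11 (w : ℕ) (hw : 4 ≤ w) (a : Fin w → ZMod 2) (ha : a ⟨0, by omega⟩ = 1)
    (s : ℕ) (hs : s ≤ w) :
    (Matrix.fromRows ((mtB w a) ^ s) (mtQ w a s)).rank = w := by
  set M := Matrix.fromRows ((mtB w a) ^ s) (mtQ w a s) with hM
  have hker : LinearMap.ker M.mulVecLin = ⊥ := by
    rw [LinearMap.ker_eq_bot']
    intro x hx
    rw [Matrix.mulVecLin_apply, hM, Matrix.fromRows_mulVec] at hx
    have h1 : ((mtB w a) ^ s).mulVec x = 0 := funext fun i => congrFun hx (Sum.inl i)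
    have h2 : (mtQ w a s).mulVec x = 0 := funext fun i => congrFun hx (Sum.inr i)
    have h3 : ((mtB w a + mtC w) ^ s).mulVec x = 0 := by
      rw [mt_Dpow w a hw s hs, Matrix.add_mulVec, h1, h2, add_zero]
    exact mt_Ds_inj w a hw ha s x h3
  have := LinearMap.finrank_range_add_finrank_ker M.mulVecLin
  rw [hker, finrank_bot, add_zero] at this
  rw [Matrix.rank, this]
  simp
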